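/- For all integers m and e, the tetrahedral index satisfies the symmetry I_Δ(m,e) = (-u)^{-e} · I_Δ(e, -e-m), where u plays the role of q^{1/2}. -/

import Mathlib

open scoped BigOperators

/-- Finite q-Pochhammer symbol `(a;q)_n = ∏_{i=0}^{n-1} (1 - a q^i)`. -/
noncomputable def qPoch (a q : ℂ) (n : ℕ) : ℂ :=
  ∏ i ∈ Finset.range n, (1 - a * q ^ i)

/-- Infinite q-Pochhammer symbol `(a;q)_∞ = ∏_{i=0}^{∞} (1 - a q^i)`. -/
noncomputable def qPochInf (a q : ℂ) : ℂ :=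
  ∏' i : ℕ, (1 - a * q ^ i)

/-- The `n`-th term of the series defining the tetrahedral index `I_Δ(m,e)`,
with `q = u^2` and vanishing below `e₊ = max(-e,0)`. -/
noncomputable def tetTerm (u : ℂ) (m e : ℤ) (n : ℕ) : ℂ :=
  if (-e).toNat ≤ n then
    (-1 : ℂ) ^ n * u ^ ((n : ℤ) * ((n : ℤ) + 1) - (2 * (n : ℤ) + e) * m) /
      (qPoch (u ^ 2) (u ^ 2) n * qPoch (u ^ 2) (u ^ 2) ((n : ℤ) + e).toNat)
  else 0

/-- The tetrahedral index `I_Δ(m,e) = Σ_{n=e₊}^∞ (-1)^n u^{n(n+1)-(2n+e)m}/((q;q)_n (q;q)_{n+e})`. -/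
noncomputable def tetIndex (u : ℂ) (m e : ℤ) : ℂ := ∑' n : ℕ, tetTerm u m e n

namespace T3

/-- A-type coefficient. -/
noncomputable def Ah (u v : ℂ) (n : ℤ) : ℂ :=
  if 0 ≤ n then (-1 : ℂ) ^ n.toNat * u ^ (n * (n + 1)) * v ^ n.toNat /
    qPoch (u ^ 2) (u ^ 2) n.toNat else 0

/-- B-type coefficient. -/
noncomputable def Bh (u w : ℂ) (p : ℤ) : ℂ :=
  if 0 ≤ p then w ^ p.toNat / qPoch (u ^ 2) (u ^ 2) p.toNat else 0

/-- bilinear convolution sum -/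
noncomputable def S (u v w : ℂ) (e : ℤ) : ℂ := ∑' n : ℤ, Ah u v n * Bh u w (n + e)

variable {u : ℂ} (hu : u ≠ 0) (hu1 : ‖u‖ < 1)

lemma qPoch_norm_le (hu1 : ‖u‖ < 1) (k : ℕ) : (1 - ‖u‖ ^ 2) ^ k ≤ ‖qPoch (u ^ 2) (u ^ 2) k‖ := by
  unfold qPoch
  rw [norm_prod]
  rw [show (1 - ‖u‖ ^ 2) ^ k = ∏ _i ∈ Finset.range k, (1 - ‖u‖ ^ 2) by
    rw [Finset.prod_const, Finset.card_range]]
  apply Finset.prod_le_prod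
  · intro i _
    nlinarith [norm_nonneg u, hu1]
  · intro i _
    have h1 : ‖u ^ 2 * (u ^ 2) ^ i‖ ≤ ‖u‖ ^ 2 := by
      rw [norm_mul, norm_pow, norm_pow, norm_pow]
      calc ‖u‖ ^ 2 * (‖u‖ ^ 2) ^ i ≤ ‖u‖ ^ 2 * 1 := by
            apply mul_le_mul_of_nonneg_left _ (by positivity)
            exact pow_le_one₀ (by positivity) (by nlinarith [norm_nonneg u, hu1])
        _ = ‖u‖ ^ 2 := by ring
    have h2 : ‖(1:ℂ)‖ - ‖u ^ 2 * (u ^ 2) ^ i‖ ≤ ‖1 - u ^ 2 * (u ^ 2) ^ i‖ :=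
      norm_sub_norm_le _ _
    rw [norm_one] at h2
    linarith

lemma one_sub_usq_pos (hu1 : ‖u‖ < 1) : 0 < 1 - ‖u‖ ^ 2 := by
  nlinarith [norm_nonneg u]

lemma qPoch_ne_zero (hu1 : ‖u‖ < 1) (k : ℕ) : qPoch (u ^ 2) (u ^ 2) k ≠ 0 := by
  have h := qPoch_norm_le (u := u) hu1 k
  have h2 : (0:ℝ) < (1 - ‖u‖ ^ 2) ^ k := pow_pos (one_sub_usq_pos hu1) k
  intro hc
  rw [hc, norm_zero] at h
  linarith

lemma Ah_ofNat (v : ℂ) (n : ℕ) : Ah u v n =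
    (-1 : ℂ) ^ n * u ^ ((n:ℤ) * (n + 1)) * v ^ n / qPoch (u ^ 2) (u ^ 2) n := by
  simp [Ah]

lemma Bh_ofNat (w : ℂ) (p : ℕ) : Bh u w p = w ^ p / qPoch (u ^ 2) (u ^ 2) p := by
  simp [Bh]

lemma Ah_neg (v : ℂ) {n : ℤ} (hn : n < 0) : Ah u v n = 0 := by
  simp [Ah, not_le.mpr hn]

lemma Bh_neg (w : ℂ) {p : ℤ} (hp : p < 0) : Bh u w p = 0 := by
  simp [Bh, not_le.mpr hp]


lemma qPoch_succ (a : ℂ) (k : ℕ) :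
    qPoch (u ^ 2) a (k + 1) = qPoch (u ^ 2) a k * (1 - u ^ 2 * a ^ k) := by
  unfold qPoch; rw [Finset.prod_range_succ]

/-- `Bh (u²w) p = Bh w p - w Bh w (p-1)` -/
lemma Bh_step (hu1 : ‖u‖ < 1) (w : ℂ) (p : ℤ) :
    Bh u (u ^ 2 * w) p = Bh u w p - w * Bh u w (p - 1) := by
  rcases lt_or_ge p 0 with hp | hp
  · rw [Bh_neg _ hp, Bh_neg _ hp, Bh_neg _ (by omega)]; ring
  · obtain ⟨k, rfl⟩ : ∃ k : ℕ, p = (k : ℤ) := ⟨p.toNat, (Int.toNat_of_nonneg hp).symm⟩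
    cases k with
    | zero => simp [Bh]
    | succ k =>
      have h1 : ((k:ℤ) + 1 - 1) = (k : ℤ) := by ring
      rw [show ((k+1 : ℕ) : ℤ) = (k : ℤ) + 1 by push_cast; ring] at *
      rw [h1, show ((k:ℤ) + 1) = ((k+1 : ℕ) : ℤ) by push_cast; ring]
      rw [Bh_ofNat, Bh_ofNat, Bh_ofNat, qPoch_succ]
      have hq1 : qPoch (u ^ 2) (u ^ 2) k ≠ 0 := qPoch_ne_zero hu1 k
      have hq2 : (1 - u ^ 2 * (u ^ 2) ^ k) ≠ 0 := by
        have := qPoch_ne_zero hu1 (k+1)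
        rw [qPoch_succ] at this
        exact right_ne_zero_of_mul this
      field_simp
      ring

/-- `Ah v n = Ah (u²v) n - u²v · Ah (u²v) (n-1)` -/
lemma Ah_step (hu : u ≠ 0) (hu1 : ‖u‖ < 1) (v : ℂ) (n : ℤ) :
    Ah u v n = Ah u (u ^ 2 * v) n - u ^ 2 * v * Ah u (u ^ 2 * v) (n - 1) := by
  rcases lt_or_ge n 0 with hn | hn
  · rw [Ah_neg _ hn, Ah_neg _ hn, Ah_neg _ (by omega)]; ring
  · obtain ⟨k, rfl⟩ : ∃ k : ℕ, n = (k : ℤ) := ⟨n.toNat, (Int.toNat_of_nonneg hn).symm⟩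
    cases k with
    | zero => simp [Ah]
    | succ k =>
      have h1 : ((k:ℤ) + 1 - 1) = (k : ℤ) := by ring
      rw [show ((k+1 : ℕ) : ℤ) = (k : ℤ) + 1 by push_cast; ring] at *
      rw [h1, show ((k:ℤ) + 1) = ((k+1 : ℕ) : ℤ) by push_cast; ring]
      rw [Ah_ofNat, Ah_ofNat, Ah_ofNat, qPoch_succ]
      have hq1 : qPoch (u ^ 2) (u ^ 2) k ≠ 0 := qPoch_ne_zero hu1 k
      have hq2 : (1 - u ^ 2 * (u ^ 2) ^ k) ≠ 0 := by
        have := qPoch_ne_zero hu1 (k+1)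
        rw [qPoch_succ] at this
        exact right_ne_zero_of_mul this
      have hexp : ((k+1:ℕ):ℤ) * (((k+1:ℕ):ℤ) + 1) = (k:ℤ) * ((k:ℤ)+1) + 2*(k:ℤ) + 2 := by
        push_cast; ring
      rw [hexp]
      have hz : u ^ ((k:ℤ) * ((k:ℤ)+1) + 2*(k:ℤ) + 2)
          = u ^ ((k:ℤ) * ((k:ℤ)+1)) * (u ^ 2) ^ (k:ℕ) * u ^ 2 := by
        have e2k : u ^ ((2:ℤ)*(k:ℤ)) = (u^2)^k := by
          rw [show (2:ℤ)*(k:ℤ) = ((2*k : ℕ) : ℤ) by push_cast; ring, zpow_natCast, pow_mul]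
        have e2 : u ^ ((2:ℤ)) = u^2 := by
          rw [show (2:ℤ) = ((2:ℕ):ℤ) by norm_num, zpow_natCast]
        rw [zpow_add₀ hu, zpow_add₀ hu, e2k, e2]
      rw [hz]
      field_simp
      ring


lemma one_sub_q_norm (hu1 : ‖u‖ < 1) (k : ℕ) : 1 - ‖u‖^2 ≤ ‖1 - u ^ 2 * (u ^ 2) ^ k‖ := by
  have h1 : ‖u ^ 2 * (u ^ 2) ^ k‖ ≤ ‖u‖ ^ 2 := by
    rw [norm_mul, norm_pow, norm_pow, norm_pow]
    calc ‖u‖ ^ 2 * (‖u‖ ^ 2) ^ k ≤ ‖u‖ ^ 2 * 1 := by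
          apply mul_le_mul_of_nonneg_left _ (by positivity)
          exact pow_le_one₀ (by positivity) (by nlinarith [norm_nonneg u, hu1])
      _ = ‖u‖ ^ 2 := by ring
  have h2 : ‖(1:ℂ)‖ - ‖u ^ 2 * (u ^ 2) ^ k‖ ≤ ‖1 - u ^ 2 * (u ^ 2) ^ k‖ :=
    norm_sub_norm_le _ _
  rw [norm_one] at h2
  linarith

lemma one_sub_q_ne (hu1 : ‖u‖ < 1) (k : ℕ) : (1 - u ^ 2 * (u ^ 2) ^ k) ≠ 0 := by
  intro hc
  have := one_sub_q_norm (u := u) hu1 k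
  rw [hc, norm_zero] at this
  nlinarith [norm_nonneg u, hu1]

lemma Ah_succ (hu : u ≠ 0) (hu1 : ‖u‖ < 1) (v : ℂ) (n : ℕ) :
    Ah u v ((n+1 : ℕ) : ℤ)
      = -((u ^ 2) ^ (n + 1) * v) * Ah u v (n : ℤ) / (1 - u ^ 2 * (u ^ 2) ^ n) := by
  rw [Ah_ofNat, Ah_ofNat, qPoch_succ]
  have hexp : ((n+1:ℕ):ℤ) * (((n+1:ℕ):ℤ) + 1) = (n:ℤ) * ((n:ℤ)+1) + 2*((n:ℤ)+1) := by
    push_cast; ring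
  rw [hexp]
  have hz : u ^ ((n:ℤ) * ((n:ℤ)+1) + 2*((n:ℤ)+1))
      = u ^ ((n:ℤ) * ((n:ℤ)+1)) * (u^2)^(n+1) := by
    rw [zpow_add₀ hu]
    congr 1
    rw [show (2:ℤ)*((n:ℤ)+1) = ((2*(n+1) : ℕ) : ℤ) by push_cast; ring, zpow_natCast, pow_mul]
  rw [hz]
  have hq1 : qPoch (u ^ 2) (u ^ 2) n ≠ 0 := qPoch_ne_zero hu1 n
  have hq2 := one_sub_q_ne (u := u) hu1 n
  field_simp
  ring

lemma Bh_succ (hu1 : ‖u‖ < 1) (w : ℂ) (p : ℕ) :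
    Bh u w ((p+1 : ℕ) : ℤ) = w * Bh u w (p : ℤ) / (1 - u ^ 2 * (u ^ 2) ^ p) := by
  rw [Bh_ofNat, Bh_ofNat, qPoch_succ]
  have hq1 : qPoch (u ^ 2) (u ^ 2) p ≠ 0 := qPoch_ne_zero hu1 p
  have hq2 := one_sub_q_ne (u := u) hu1 p
  field_simp
  ring

lemma summable_AB (hu : u ≠ 0) (hu1 : ‖u‖ < 1) (v w : ℂ) (e : ℤ) :
    Summable (fun n : ℤ => Ah u v n * Bh u w (n + e)) := by
  apply Summable.of_nat_of_neg_add_one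
  · -- positive part, ratio test
    apply summable_of_ratio_norm_eventually_le (r := 1/2) (by norm_num)
    have hd : 0 < 1 - ‖u‖ ^ 2 := one_sub_usq_pos hu1
    set C : ℝ := ‖v‖ * ‖w‖ / ((1 - ‖u‖^2) * (1 - ‖u‖^2)) with hC
    have hC0 : 0 ≤ C := by positivity
    -- eventually C * (‖u‖^2)^(n+1) ≤ 1/2
    have htend : Filter.Tendsto (fun n : ℕ => C * (‖u‖^2)^(n+1)) Filter.atTop (nhds 0) := by
      have h1 : Filter.Tendsto (fun n : ℕ => (‖u‖^2)^n) Filter.atTop (nhds 0) :=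
        tendsto_pow_atTop_nhds_zero_of_lt_one (by positivity)
          (by nlinarith [norm_nonneg u, hu1])
      have h2 := (h1.const_mul C).comp (Filter.tendsto_add_atTop_nat 1)
      simpa [Function.comp_def] using h2
    have hev1 : ∀ᶠ n : ℕ in Filter.atTop, C * (‖u‖^2)^(n+1) ≤ 1/2 :=
      (htend.eventually_lt_const (by norm_num : (0:ℝ) < 1/2)).mono fun n h => h.le
    have hev2 : ∀ᶠ n : ℕ in Filter.atTop, 0 ≤ (n:ℤ) + e :=
      Filter.eventually_atTop.mpr ⟨e.natAbs + 1, fun n hn => by omega⟩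
    filter_upwards [hev1, hev2] with n h1 h2
    -- identify indices
    set p : ℕ := ((n:ℤ) + e).toNat with hp
    have hpz : ((p:ℕ) : ℤ) = (n:ℤ) + e := Int.toNat_of_nonneg h2
    have hidx : ((n:ℤ) + 1) + e = ((p+1 : ℕ) : ℤ) := by push_cast [hpz]; ring
    have hnn : ((n+1 : ℕ) : ℤ) = (n:ℤ) + 1 := by push_cast; ring
    calc ‖Ah u v ((n:ℤ)+1) * Bh u w (((n:ℤ)+1) + e)‖
        = ‖Ah u v ((n+1:ℕ):ℤ)‖ * ‖Bh u w ((p+1 : ℕ) : ℤ)‖ := by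
          rw [norm_mul, hnn, hidx]
      _ ≤ ((‖u‖^2)^(n+1) * ‖v‖ * ‖Ah u v (n:ℤ)‖ / (1-‖u‖^2)) *
            (‖w‖ * ‖Bh u w ((p:ℕ):ℤ)‖ / (1-‖u‖^2)) := by
          apply mul_le_mul _ _ (norm_nonneg _) (by positivity)
          · rw [Ah_succ hu hu1, norm_div, norm_mul, norm_neg, norm_mul, norm_pow, norm_pow]
            apply div_le_div₀ (by positivity) _ hd (one_sub_q_norm hu1 n)
            apply le_of_eq
            ring
          · rw [Bh_succ hu1, norm_div, norm_mul]
            apply div_le_div₀ (by positivity) le_rfl hd (one_sub_q_norm hu1 p)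
      _ = (C * (‖u‖^2)^(n+1)) * (‖Ah u v (n:ℤ)‖ * ‖Bh u w ((p:ℕ):ℤ)‖) := by
          rw [hC]; field_simp
      _ ≤ (1/2) * (‖Ah u v (n:ℤ)‖ * ‖Bh u w ((p:ℕ):ℤ)‖) := by
          apply mul_le_mul_of_nonneg_right h1 (by positivity)
      _ = 1/2 * ‖Ah u v (n:ℤ) * Bh u w ((n:ℤ) + e)‖ := by
          rw [norm_mul, hpz]
  · -- negative part is zero
    have hz : ∀ n : ℕ, Ah u v (-((n:ℤ)+1)) * Bh u w (-((n:ℤ)+1) + e) = 0 := fun n => by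
      rw [Ah_neg _ (by omega), zero_mul]
    exact summable_zero.congr fun n => (hz n).symm


lemma stepA (hu : u ≠ 0) (hu1 : ‖u‖ < 1) (v w : ℂ) (e : ℤ) :
    S u v w e = S u (u^2*v) w e - u^2*v * S u (u^2*v) w (e+1) := by
  have h1 : Summable (fun n : ℤ => Ah u (u^2*v) n * Bh u w (n + e)) :=
    summable_AB hu hu1 _ _ _
  have h2 : Summable (fun n : ℤ => Ah u (u^2*v) n * Bh u w (n + (e+1))) :=
    summable_AB hu hu1 _ _ _
  have h2' : Summable (fun n : ℤ => u^2*v * (Ah u (u^2*v) (n-1) * Bh u w (n + e))) := by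
    have h3 := (Equiv.subRight (1:ℤ)).summable_iff.mpr h2
    have h4 : (fun n : ℤ => Ah u (u^2*v) (n-1) * Bh u w (n + e))
        = (fun n : ℤ => Ah u (u^2*v) n * Bh u w (n + (e+1))) ∘ (Equiv.subRight (1:ℤ)) := by
      funext n
      simp only [Function.comp, Equiv.subRight_apply]
      congr 2
      ring
    rw [← h4] at h3
    exact h3.mul_left _
  calc S u v w e
      = ∑' n : ℤ, (Ah u (u^2*v) n * Bh u w (n+e)
          - u^2*v * (Ah u (u^2*v) (n-1) * Bh u w (n+e))) := by
        unfold S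
        congr 1
        funext n
        rw [Ah_step hu hu1 v n]
        ring
    _ = (∑' n : ℤ, Ah u (u^2*v) n * Bh u w (n+e))
          - ∑' n : ℤ, u^2*v * (Ah u (u^2*v) (n-1) * Bh u w (n+e)) := Summable.tsum_sub h1 h2'
    _ = S u (u^2*v) w e - u^2*v * S u (u^2*v) w (e+1) := by
        unfold S
        congr 1
        rw [tsum_mul_left]
        congr 1
        have h4 := (Equiv.subRight (1:ℤ)).tsum_eq
          (fun n : ℤ => Ah u (u^2*v) n * Bh u w (n + (e+1)))
        rw [← h4]
        congr 1
        funext n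
        simp only [Equiv.subRight_apply]
        congr 2
        ring

lemma stepB (hu : u ≠ 0) (hu1 : ‖u‖ < 1) (v w : ℂ) (e : ℤ) :
    S u v (u^2*w) e = S u v w e - w * S u v w (e-1) := by
  have h1 : Summable (fun n : ℤ => Ah u v n * Bh u w (n + e)) := summable_AB hu hu1 _ _ _
  have h2 : Summable (fun n : ℤ => Ah u v n * Bh u w (n + (e-1))) := summable_AB hu hu1 _ _ _
  have h2' : Summable (fun n : ℤ => w * (Ah u v n * Bh u w (n + (e-1)))) := h2.mul_left _
  calc S u v (u^2*w) e
      = ∑' n : ℤ, (Ah u v n * Bh u w (n+e) - w * (Ah u v n * Bh u w (n+(e-1)))) := by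
        unfold S
        congr 1
        funext n
        rw [Bh_step hu1 w (n+e), show n + e - 1 = n + (e-1) by ring]
        ring
    _ = (∑' n : ℤ, Ah u v n * Bh u w (n+e)) - ∑' n : ℤ, w * (Ah u v n * Bh u w (n+(e-1))) :=
        Summable.tsum_sub h1 h2'
    _ = S u v w e - w * S u v w (e-1) := by
        unfold S
        rw [tsum_mul_left]


lemma key (hu : u ≠ 0) (hu1 : ‖u‖ < 1) (m : ℕ) :
    ∀ v w : ℂ, v * w * (u^2)^m = 1 → ∀ e : ℤ,
      S u v w e = (-1)^m * v^m * u^(m*(m+1)) *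
        S u ((u^2)^m * v) ((u^2)^m * w) (e + m) := by
  induction m with
  | zero => intro v w _ e; simp
  | succ m ih =>
    intro v w hvw e
    have h1 : (u^2*v) * w * (u^2)^m = 1 := by
      rw [pow_succ] at hvw
      linear_combination hvw
    rw [stepA hu hu1 v w e, ih (u^2*v) w h1 e, ih (u^2*v) w h1 (e+1)]
    have hA : (u^2)^m * (u^2*v) = (u^2)^(m+1) * v := by ring
    rw [hA]
    have hB := stepB hu hu1 ((u^2)^(m+1)*v) ((u^2)^m*w) ((e + m) + 1)
    rw [show u^2*((u^2)^m*w) = (u^2)^(m+1)*w by ring] at hB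
    rw [show ((e + (m:ℤ)) + 1) - 1 = e + m by ring] at hB
    have hi1 : (e + 1) + (m:ℤ) = (e + m) + 1 := by ring
    rw [hi1]
    have hi2 : e + ((m+1 : ℕ) : ℤ) = (e + m) + 1 := by push_cast; ring
    rw [hi2, hB]
    set X := S u ((u^2)^(m+1)*v) ((u^2)^m*w) (e + (m:ℤ)) with hX
    set Y := S u ((u^2)^(m+1)*v) ((u^2)^m*w) ((e + (m:ℤ)) + 1) with hY
    linear_combination (-((-1:ℂ)^m * v^m * u^(m*m+3*m) * X)) * hvw

lemma key_nat (hu : u ≠ 0) (hu1 : ‖u‖ < 1) (k : ℕ) (e : ℤ) :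
    S u (u^(-(k:ℤ))) (u^(-(k:ℤ))) e
      = (-1:ℂ)^k * u^((k:ℤ)) * S u (u^((k:ℤ))) (u^((k:ℤ))) (e + k) := by
  have hc : u^(-(k:ℤ)) * u^(-(k:ℤ)) * (u^2)^k = 1 := by
    have hz : (-(k:ℤ)) + (-(k:ℤ)) + ((2*k : ℕ) : ℤ) = 0 := by push_cast; ring
    rw [← pow_mul, ← zpow_natCast u (2*k), ← zpow_add₀ hu, ← zpow_add₀ hu, hz, zpow_zero]
  have h := key hu hu1 k _ _ hc e
  rw [h]
  have hS : (u^2)^k * u^(-(k:ℤ)) = u^((k:ℤ)) := by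
    rw [← pow_mul, ← zpow_natCast u (2*k), ← zpow_add₀ hu]
    congr 1
    push_cast
    ring
  rw [hS]
  congr 1
  have h2 : (u^(-(k:ℤ)))^k * u^(k*(k+1)) = u^((k:ℤ)) := by
    rw [← zpow_natCast (u^(-(k:ℤ))) k, ← zpow_mul, ← zpow_natCast u (k*(k+1)),
      ← zpow_add₀ hu]
    congr 1
    push_cast
    ring
  rw [mul_assoc, h2]

lemma key_z (hu : u ≠ 0) (hu1 : ‖u‖ < 1) (m e : ℤ) :
    S u (u^(-m)) (u^(-m)) e = (-1:ℂ)^m * u^m * S u (u^m) (u^m) (e + m) := by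
  rcases le_or_gt 0 m with hm | hm
  · obtain ⟨k, rfl⟩ : ∃ k : ℕ, m = (k:ℤ) := ⟨m.toNat, (Int.toNat_of_nonneg hm).symm⟩
    rw [key_nat hu hu1 k e, zpow_natCast (-1:ℂ) k]
  · obtain ⟨k, rfl⟩ : ∃ k : ℕ, m = -(k:ℤ) := ⟨m.natAbs, by omega⟩
    rw [neg_neg]
    have h := key_nat hu hu1 k (e + -(k:ℤ))
    rw [show e + -(k:ℤ) + (k:ℤ) = e by ring] at h
    rw [h, zpow_neg, zpow_neg, zpow_natCast (-1:ℂ) k]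
    have h1 : ((-1:ℂ))^k ≠ 0 := by
      intro hc
      have := pow_ne_zero k (by norm_num : (-1:ℂ) ≠ 0)
      exact this hc
    have h2 : u^((k:ℤ)) ≠ 0 := zpow_ne_zero _ hu
    field_simp

lemma tsum_int_eq_tsum_nat {f : ℤ → ℂ} (h : ∀ j : ℤ, f j ≠ 0 → 0 ≤ j) :
    ∑' j : ℤ, f j = ∑' n : ℕ, f n := by
  apply tsum_eq_tsum_of_ne_zero_bij (fun x => ((x.1 : ℕ) : ℤ))
  · intro a b hab
    simp only at hab
    exact Subtype.ext (by exact_mod_cast hab)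
  · intro j hj
    have h0 := h j hj
    refine ⟨⟨j.toNat, Function.mem_support.mpr ?_⟩, ?_⟩
    · show f ((j.toNat : ℤ)) ≠ 0
      rw [Int.toNat_of_nonneg h0]
      exact hj
    · show ((j.toNat : ℕ) : ℤ) = j
      exact Int.toNat_of_nonneg h0
  · intro x
    rfl

lemma tsum_int_eq_tsum_nat_shift {f : ℤ → ℂ} (c : ℤ) (h : ∀ j : ℤ, f j ≠ 0 → 0 ≤ j + c) :
    ∑' j : ℤ, f j = ∑' n : ℕ, f (↑n - c) := by
  apply tsum_eq_tsum_of_ne_zero_bij (fun x => ((x.1 : ℕ) : ℤ) - c)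
  · intro a b hab
    simp only at hab
    have : ((a.1 : ℕ) : ℤ) = ((b.1 : ℕ) : ℤ) := by omega
    exact Subtype.ext (by exact_mod_cast this)
  · intro j hj
    have h0 := h j hj
    have hz : (((j+c).toNat : ℕ) : ℤ) - c = j := by omega
    refine ⟨⟨(j+c).toNat, Function.mem_support.mpr ?_⟩, ?_⟩
    · show f ((((j+c).toNat : ℕ) : ℤ) - c) ≠ 0
      rw [hz]
      exact hj
    · show (((j+c).toNat : ℕ) : ℤ) - c = j
      exact hz
  · intro x
    rfl

lemma tet_term_eq (hu : u ≠ 0) (m e : ℤ) (n : ℕ) :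
    Ah u (u^(-m)) (n:ℤ) * Bh u (u^(-m)) ((n:ℤ)+e) = tetTerm u m e n := by
  by_cases h : 0 ≤ (n:ℤ) + e
  · have hcond : (-e).toNat ≤ n := by omega
    rw [tetTerm, if_pos hcond, Ah_ofNat]
    set p := ((n:ℤ)+e).toNat with hp
    have hpz : ((p:ℕ):ℤ) = (n:ℤ)+e := Int.toNat_of_nonneg h
    rw [show ((n:ℤ)+e) = ((p:ℕ):ℤ) from hpz.symm, Bh_ofNat]
    have hv1 : (u^(-m))^(n:ℕ) = u^((-m) * (n:ℤ)) := by rw [zpow_mul, zpow_natCast]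
    have hv2 : (u^(-m))^(p:ℕ) = u^((-m) * ((p:ℕ):ℤ)) := by rw [zpow_mul, zpow_natCast]
    rw [hv1, hv2, div_mul_div_comm]
    congr 1
    calc (-1:ℂ)^n * u^((n:ℤ)*((n:ℤ)+1)) * u^((-m) * (n:ℤ)) * u^((-m) * ((p:ℕ):ℤ))
        = (-1:ℂ)^n * (u^((n:ℤ)*((n:ℤ)+1)) * (u^((-m) * (n:ℤ)) * u^((-m) * ((p:ℕ):ℤ)))) := by
          ring
      _ = (-1:ℂ)^n * u^((n:ℤ)*((n:ℤ)+1) + ((-m) * (n:ℤ) + (-m) * ((p:ℕ):ℤ))) := by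
          rw [← zpow_add₀ hu, ← zpow_add₀ hu]
      _ = (-1:ℂ)^n * u^((n:ℤ)*((n:ℤ)+1) - (2*(n:ℤ)+e)*m) := by
          congr 1
          rw [hpz]
          ring
  · have hcond : ¬ ((-e).toNat ≤ n) := by omega
    rw [tetTerm, if_neg hcond, Bh_neg _ (by omega), mul_zero]

lemma lemma1 (hu : u ≠ 0) (m e : ℤ) : tetIndex u m e = S u (u^(-m)) (u^(-m)) e := by
  unfold S
  rw [tsum_int_eq_tsum_nat (f := fun j : ℤ => Ah u (u^(-m)) j * Bh u (u^(-m)) (j+e))]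
  · unfold tetIndex
    congr 1
    funext n
    exact (tet_term_eq hu m e n).symm
  · intro j hj
    by_contra hneg
    rw [Ah_neg _ (by omega), zero_mul] at hj
    exact hj rfl


lemma tet_term_eq3 (hu : u ≠ 0) (m e : ℤ) (n : ℕ) :
    (-u)^(-e) * tetTerm u e (-e-m) n
      = (-1:ℂ)^m * u^m *
        (Ah u (u^m) ((n:ℤ) - (e+m)) * Bh u (u^m) (((n:ℤ) - (e+m)) + (e+m))) := by
  have hm1 : (-1 : ℂ) ≠ 0 := by norm_num
  by_cases h : 0 ≤ (n:ℤ) - (e+m)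
  · have hcond : (-(-e-m)).toNat ≤ n := by omega
    rw [tetTerm, if_pos hcond, show ((n:ℤ) + (-e-m)) = (n:ℤ) - (e+m) by ring]
    set J := ((n:ℤ) - (e+m)).toNat with hJ
    have hJz : ((J:ℕ):ℤ) = (n:ℤ) - (e+m) := Int.toNat_of_nonneg h
    rw [show (((n:ℤ) - (e+m)) + (e+m)) = ((n:ℕ):ℤ) by push_cast; ring]
    rw [show (n:ℤ) - (e+m) = ((J:ℕ):ℤ) from hJz.symm]
    rw [Ah_ofNat, Bh_ofNat]
    rw [show (-u) = (-1 : ℂ) * u by ring, mul_zpow]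
    rw [show (u^m)^(J:ℕ) = u^(m * ((J:ℕ):ℤ)) by rw [zpow_mul, zpow_natCast]]
    rw [show (u^m)^(n:ℕ) = u^(m * ((n:ℕ):ℤ)) by rw [zpow_mul, zpow_natCast]]
    rw [show ((-1:ℂ))^(n:ℕ) = (-1:ℂ)^((n:ℕ):ℤ) by rw [zpow_natCast]]
    rw [show ((-1:ℂ))^(J:ℕ) = (-1:ℂ)^((J:ℕ):ℤ) by rw [zpow_natCast]]
    set Pn := qPoch (u^2) (u^2) n with hPn
    set PJ := qPoch (u^2) (u^2) J with hPJ
    set E1 := (n:ℤ) * ((n:ℤ) + 1) - (2 * (n:ℤ) + (-e - m)) * e with hE1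
    set JJ := ((J:ℕ):ℤ) * (((J:ℕ):ℤ) + 1) with hJJ
    have hnum : (-1:ℂ)^(-e) * u^(-e) * ((-1:ℂ)^((n:ℕ):ℤ) * u^E1)
        = (-1:ℂ)^m * u^m * ((-1:ℂ)^((J:ℕ):ℤ) * u^JJ * u^(m * ((J:ℕ):ℤ)) * u^(m * ((n:ℕ):ℤ))) := by
      calc (-1:ℂ)^(-e) * u^(-e) * ((-1:ℂ)^((n:ℕ):ℤ) * u^E1)
          = ((-1:ℂ)^(-e) * (-1:ℂ)^((n:ℕ):ℤ)) * (u^(-e) * u^E1) := by ring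
        _ = (-1:ℂ)^(-e + (n:ℤ)) * u^(-e + E1) := by
            rw [← zpow_add₀ hm1, ← zpow_add₀ hu]
        _ = (-1:ℂ)^(m + ((J:ℕ):ℤ)) * u^(m + (JJ + (m * ((J:ℕ):ℤ) + m * ((n:ℕ):ℤ)))) := by
            congr 1
            · congr 1
              omega
            · congr 1
              rw [hE1, hJJ, hJz]
              ring
        _ = (-1:ℂ)^m * u^m * ((-1:ℂ)^((J:ℕ):ℤ) * u^JJ * u^(m * ((J:ℕ):ℤ)) * u^(m * ((n:ℕ):ℤ))) := by
            rw [zpow_add₀ hm1, zpow_add₀ hu, zpow_add₀ hu, zpow_add₀ hu]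
            ring
    calc (-1:ℂ)^(-e) * u^(-e) * ((-1:ℂ)^((n:ℕ):ℤ) * u^E1 / (Pn * PJ))
        = ((-1:ℂ)^(-e) * u^(-e) * ((-1:ℂ)^((n:ℕ):ℤ) * u^E1)) / (Pn * PJ) := by ring
      _ = ((-1:ℂ)^m * u^m * ((-1:ℂ)^((J:ℕ):ℤ) * u^JJ * u^(m * ((J:ℕ):ℤ)) * u^(m * ((n:ℕ):ℤ)))) / (Pn * PJ) := by
          rw [hnum]
      _ = (-1:ℂ)^m * u^m * ((-1:ℂ)^((J:ℕ):ℤ) * u^JJ * u^(m * ((J:ℕ):ℤ)) / PJ * (u^(m * ((n:ℕ):ℤ)) / Pn)) := by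
          ring
  · have hcond : ¬ ((-(-e-m)).toNat ≤ n) := by omega
    rw [tetTerm, if_neg hcond, Ah_neg _ (by omega), zero_mul, mul_zero, mul_zero]

lemma lemma3 (hu : u ≠ 0) (m e : ℤ) :
    (-u)^(-e) * tetIndex u e (-e-m) = (-1:ℂ)^m * u^m * S u (u^m) (u^m) (e+m) := by
  unfold tetIndex
  rw [← tsum_mul_left]
  have hptw : ∀ n : ℕ, (-u)^(-e) * tetTerm u e (-e-m) n
      = (-1:ℂ)^m * u^m *
        (Ah u (u^m) ((n:ℤ) - (e+m)) * Bh u (u^m) (((n:ℤ) - (e+m)) + (e+m))) :=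
    tet_term_eq3 hu m e
  rw [tsum_congr hptw, tsum_mul_left]
  congr 1
  unfold S
  rw [tsum_int_eq_tsum_nat_shift (f := fun j : ℤ => Ah u (u^m) j * Bh u (u^m) (j + (e+m))) (e+m)]
  intro j hj
  by_contra hneg
  rw [Bh_neg _ (by omega), mul_zero] at hj
  exact hj rfl

end T3

/-- `I_Δ(m,e) = (-q^{1/2})^{-e} I_Δ(e, -e-m)`, with `u = q^{1/2}`. -/
theorem stmt_3 (u : ℂ) (hu0 : 0 < ‖u‖) (hu1 : ‖u‖ < 1) (m e : ℤ) :
    tetIndex u m e = (-u) ^ (-e) * tetIndex u e (-e - m) := by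
  have hu : u ≠ 0 := by
    intro hc
    rw [hc, norm_zero] at hu0
    exact lt_irrefl 0 hu0
  rw [T3.lemma1 hu m e, T3.lemma3 hu m e]
  exact T3.key_z hu hu1 m e
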